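/- Let J be the involution on L²([0,1]^m) defined by (Jf)(x₁,…,x_m) = f(1−x_m,…,1−x₁). Suppose the kernel χ : [0,1]^{m+1} → ℝ satisfies χ(x₁,…,x_{m+1}) = χ(1−x_{m+1},…,1−x₁). Then the adjoint of the operator (Tf)(x) = ∫₀¹ χ(t,x₁,…,x_m) f(t,x₁,…,x_{m−1}) dt satisfies T* = J T J. Moreover, if Tφ = λφ then T*(Jφ) = λ·(Jφ), and ⟨𝟙, conj(Jφ)⟩ = ⟨φ, 𝟙⟩. -/

import Mathlib

open MeasureTheory

noncomputable section

/-- The unit cube [0,1]^m. -/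
def unitCube (m : ℕ) : Set (Fin m → ℝ) := Set.univ.pi fun _ => Set.Icc (0 : ℝ) 1

/-- Lebesgue measure restricted to the unit cube. -/
def cubeMeasure (m : ℕ) : Measure (Fin m → ℝ) := volume.restrict (unitCube m)

/-- The vector (t, x₁, …, x_{m-1}) obtained by shifting x and prepending t. -/
def shiftIn {m : ℕ} (t : ℝ) (x : Fin m → ℝ) : Fin m → ℝ :=
  fun i => if i.val = 0 then t else x ⟨i.val - 1, by have := i.isLt; omega⟩

/-- The integral operator (Tf)(x₁,…,x_m) = ∫₀¹ χ(t,x₁,…,x_m) f(t,x₁,…,x_{m-1}) dt. -/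
def TOp {m : ℕ} (χ : (Fin (m + 1) → ℝ) → ℝ) (f : (Fin m → ℝ) → ℝ) :
    (Fin m → ℝ) → ℝ :=
  fun x => ∫ t in Set.Icc (0 : ℝ) 1, χ (Fin.cons t x) * f (shiftIn t x)

/-- The involution (Jf)(x₁,…,x_m) = f(1−x_m,…,1−x₁). -/
def Jop {m : ℕ} (f : (Fin m → ℝ) → ℝ) : (Fin m → ℝ) → ℝ :=
  fun x => f fun i => 1 - x i.rev

namespace JAux

lemma mp_restrict {α β : Type*} [MeasurableSpace α] [MeasurableSpace β]
    {μ : Measure α} {ν : Measure β} {f : α → β} (h : MeasurePreserving f μ ν)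
    {s : Set β} (hs : MeasurableSet s) :
    MeasurePreserving f (μ.restrict (f ⁻¹' s)) (ν.restrict s) :=
  ⟨h.measurable, by rw [← Measure.restrict_map h.measurable hs, h.map_eq]⟩

lemma measurableSet_unitCube (m : ℕ) : MeasurableSet (unitCube m) :=
  MeasurableSet.univ_pi fun _ => measurableSet_Icc

/-- Reflection t ↦ 1 - t as a measurable equivalence of ℝ. -/
def reflEquiv : ℝ ≃ᵐ ℝ where
  toFun t := 1 - t
  invFun t := 1 - t
  left_inv t := by ring
  right_inv t := by ring
  measurable_toFun := measurable_const.sub measurable_id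
  measurable_invFun := measurable_const.sub measurable_id

lemma reflEquiv_mp :
    MeasurePreserving reflEquiv (volume.restrict (Set.Icc (0:ℝ) 1))
      (volume.restrict (Set.Icc (0:ℝ) 1)) := by
  have h : MeasurePreserving (fun t : ℝ => 1 - t) volume volume :=
    Measure.measurePreserving_sub_left volume 1
  have h2 := mp_restrict h (s := Set.Icc (0:ℝ) 1) measurableSet_Icc
  have hpre : (fun t : ℝ => 1 - t) ⁻¹' Set.Icc 0 1 = Set.Icc 0 1 := by
    ext t
    simp only [Set.mem_preimage, Set.mem_Icc]
    constructor <;> (rintro ⟨a, b⟩; constructor <;> linarith)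
  rwa [hpre] at h2

lemma integral_refl (h : ℝ → ℝ) :
    ∫ t in Set.Icc (0:ℝ) 1, h (1 - t) = ∫ t in Set.Icc (0:ℝ) 1, h t :=
  reflEquiv_mp.integral_comp' h

/-- The reversal-reflection x ↦ (1 - x_{rev i}) as a measurable equivalence. -/
def sigmaEquiv (m : ℕ) : (Fin m → ℝ) ≃ᵐ (Fin m → ℝ) where
  toFun x i := 1 - x i.rev
  invFun x i := 1 - x i.rev
  left_inv x := by funext i; simp [Fin.rev_rev]
  right_inv x := by funext i; simp [Fin.rev_rev]
  measurable_toFun := measurable_pi_iff.mpr fun i => measurable_const.sub (measurable_pi_apply _)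
  measurable_invFun := measurable_pi_iff.mpr fun i => measurable_const.sub (measurable_pi_apply _)

lemma sigma_mp_vol (m : ℕ) : MeasurePreserving (sigmaEquiv m) volume volume := by
  have h1 : MeasurePreserving (fun x : Fin m → ℝ => fun i : Fin m => x i.rev) volume volume := by
    have h := volume_measurePreserving_piCongrLeft (fun _ : Fin m => ℝ) (Fin.revPerm (n := m))
    have he : ⇑(MeasurableEquiv.piCongrLeft (fun _ : Fin m => ℝ) (Fin.revPerm (n := m)))
        = fun x i => x i.rev := by
      funext x b
      obtain ⟨a, rfl⟩ := (Fin.revPerm (n := m)).surjective b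
      rw [MeasurableEquiv.piCongrLeft_apply_apply (Fin.revPerm (n := m))
        (β := fun _ : Fin m => ℝ) x a]
      show x a = x ((Fin.revPerm (n := m) a).rev)
      simp [Fin.rev_rev]
    rwa [he] at h
  have h2 : MeasurePreserving (fun x : Fin m → ℝ => fun i => 1 - x i) volume volume :=
    measurePreserving_pi _ _ fun _ => Measure.measurePreserving_sub_left volume 1
  exact h2.comp h1

lemma sigma_preimage (m : ℕ) : (sigmaEquiv m) ⁻¹' unitCube m = unitCube m := by
  ext x
  simp only [Set.mem_preimage, unitCube, Set.mem_pi, Set.mem_univ, true_implies, sigmaEquiv,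
    MeasurableEquiv.coe_mk, Equiv.coe_fn_mk, Set.mem_Icc]
  constructor
  · intro h i
    have := h i.rev
    rw [Fin.rev_rev] at this
    exact ⟨by linarith [this.2], by linarith [this.1]⟩
  · intro h i
    have := h i.rev
    exact ⟨by linarith [this.2], by linarith [this.1]⟩

lemma sigma_mp_cube (m : ℕ) :
    MeasurePreserving (sigmaEquiv m) (cubeMeasure m) (cubeMeasure m) := by
  have h2 := mp_restrict (sigma_mp_vol m) (measurableSet_unitCube m)
  rwa [sigma_preimage] at h2

lemma integral_sigma (m : ℕ) (φ : (Fin m → ℝ) → ℝ) :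
    ∫ x, φ (sigmaEquiv m x) ∂cubeMeasure m = ∫ x, φ x ∂cubeMeasure m :=
  (sigma_mp_cube m).integral_comp' φ

lemma piFinSuccAbove_preimage (m : ℕ) (i : Fin (m+1)) :
    (MeasurableEquiv.piFinSuccAbove (fun _ : Fin (m+1) => ℝ) i) ⁻¹'
      ((Set.Icc (0:ℝ) 1) ×ˢ unitCube m) = unitCube (m+1) := by
  ext y
  simp only [Set.mem_preimage, Set.mem_prod, unitCube, Set.mem_pi, Set.mem_univ, true_implies,
    MeasurableEquiv.piFinSuccAbove_apply, Fin.insertNthEquiv_symm_apply, Fin.removeNth]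
  exact (Fin.forall_iff_succAbove (P := fun k => y k ∈ Set.Icc (0:ℝ) 1) i).symm

lemma mp_cube_succAbove (m : ℕ) (i : Fin (m+1)) :
    MeasurePreserving (MeasurableEquiv.piFinSuccAbove (fun _ : Fin (m+1) => ℝ) i)
      (cubeMeasure (m+1)) ((volume.restrict (Set.Icc (0:ℝ) 1)).prod (cubeMeasure m)) := by
  have h := volume_preserving_piFinSuccAbove (fun _ : Fin (m+1) => ℝ) i
  have h2 := mp_restrict h (s := (Set.Icc (0:ℝ) 1) ×ˢ unitCube m)
    (measurableSet_Icc.prod (measurableSet_unitCube m))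
  rw [piFinSuccAbove_preimage] at h2
  rw [cubeMeasure, cubeMeasure, Measure.prod_restrict, ← Measure.volume_eq_prod]
  exact h2

instance cubeMeasure_sfinite (m : ℕ) : SFinite (cubeMeasure m) := by
  unfold cubeMeasure; infer_instance

instance : IsProbabilityMeasure (volume.restrict (Set.Icc (0:ℝ) 1)) :=
  ⟨by rw [Measure.restrict_apply_univ, Real.volume_Icc]; norm_num⟩

lemma integral_insertNth_split (m : ℕ) (i : Fin (m+1)) (F : (Fin (m+1) → ℝ) → ℝ)
    (hF : Integrable F (cubeMeasure (m+1))) :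
    ∫ x, (∫ t in Set.Icc (0:ℝ) 1, F (Fin.insertNth i t x)) ∂cubeMeasure m
      = ∫ y, F y ∂cubeMeasure (m+1) := by
  set e := MeasurableEquiv.piFinSuccAbove (fun _ : Fin (m+1) => ℝ) i with he
  have hmp := mp_cube_succAbove m i
  have hsym := hmp.symm e
  have hint : Integrable (fun p : ℝ × (Fin m → ℝ) => F (e.symm p))
      ((volume.restrict (Set.Icc (0:ℝ) 1)).prod (cubeMeasure m)) :=
    (MeasurePreserving.integrable_comp_emb hsym e.symm.measurableEmbedding).mpr hF
  rw [← hsym.integral_comp' F, integral_prod_symm _ hint]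
  rfl

lemma mp_proj_succ (m : ℕ) :
    MeasurePreserving (fun y : Fin (m+1) → ℝ => fun j : Fin m => y j.succ)
      (cubeMeasure (m+1)) (cubeMeasure m) := by
  have h : MeasurePreserving (Prod.snd : ℝ × (Fin m → ℝ) → (Fin m → ℝ))
      ((volume.restrict (Set.Icc (0:ℝ) 1)).prod (cubeMeasure m)) (cubeMeasure m) :=
    ⟨measurable_snd, by rw [Measure.map_snd_prod, measure_univ, one_smul]⟩
  exact h.comp (mp_cube_succAbove m 0)

lemma mp_proj_castSucc (m : ℕ) :
    MeasurePreserving (fun y : Fin (m+1) → ℝ => fun j : Fin m => y j.castSucc)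
      (cubeMeasure (m+1)) (cubeMeasure m) := by
  have h : MeasurePreserving (Prod.snd : ℝ × (Fin m → ℝ) → (Fin m → ℝ))
      ((volume.restrict (Set.Icc (0:ℝ) 1)).prod (cubeMeasure m)) (cubeMeasure m) :=
    ⟨measurable_snd, by rw [Measure.map_snd_prod, measure_univ, one_smul]⟩
  have h2 := h.comp (mp_cube_succAbove m (Fin.last m))
  have : (Prod.snd ∘ (MeasurableEquiv.piFinSuccAbove (fun _ : Fin (m+1) => ℝ) (Fin.last m)))
      = fun y : Fin (m+1) → ℝ => fun j : Fin m => y j.castSucc := by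
    funext y j
    simp [MeasurableEquiv.piFinSuccAbove, Fin.removeNth, Fin.init]
  rwa [this] at h2

lemma cons_castSucc {m : ℕ} (t : ℝ) (x : Fin m → ℝ) (i : Fin m) :
    (Fin.cons t x : Fin (m+1) → ℝ) i.castSucc = shiftIn t x i := by
  rcases i with ⟨v, hv⟩
  cases v with
  | zero =>
    have h0 : (Fin.mk 0 hv : Fin m).castSucc = 0 := rfl
    rw [h0, Fin.cons_zero]
    simp [shiftIn]
  | succ n =>
    have h1 : (Fin.mk (n+1) hv : Fin m).castSucc = (Fin.mk n (by omega) : Fin m).succ := rfl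
    rw [h1, Fin.cons_succ]
    simp [shiftIn]

lemma keyB {m : ℕ} (g : (Fin m → ℝ) → ℝ) (t : ℝ) (x : Fin m → ℝ) :
    Jop g (shiftIn t (fun i => 1 - x i.rev)) = g (fun i => (Fin.snoc x (1 - t) : Fin (m+1) → ℝ) i.succ) := by
  unfold Jop
  congr 1
  funext i
  rcases Nat.lt_or_ge (i.val + 1) m with h | h
  · have h1 : i.succ = Fin.castSucc (⟨i.val + 1, h⟩ : Fin m) := by
      apply Fin.ext; simp
    rw [h1, Fin.snoc_castSucc]
    have hrev : (i.rev : Fin m).val = m - (i.val + 1) := Fin.val_rev i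
    have hne : (i.rev : Fin m).val ≠ 0 := by omega
    rw [shiftIn, if_neg hne]
    have hval : ((⟨(i.rev : Fin m).val - 1, by omega⟩ : Fin m).rev : Fin m)
        = (⟨i.val + 1, h⟩ : Fin m) := by
      apply Fin.ext
      rw [Fin.val_rev]
      simp only [hrev]
      omega
    rw [hval]
    ring
  · have hlast : i.succ = Fin.last m := by
      apply Fin.ext
      have := i.isLt
      simp only [Fin.val_succ, Fin.val_last]
      omega
    rw [hlast, Fin.snoc_last]
    have hrev : (i.rev : Fin m).val = m - (i.val + 1) := Fin.val_rev i
    have h0 : (i.rev : Fin m).val = 0 := by have := i.isLt; omega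
    rw [shiftIn, if_pos h0]

lemma keyA {m : ℕ} (t : ℝ) (x : Fin m → ℝ) :
    (fun i : Fin (m+1) => 1 - (Fin.cons t (fun j : Fin m => 1 - x j.rev) : Fin (m+1) → ℝ) i.rev)
      = (Fin.snoc x (1 - t) : Fin (m+1) → ℝ) := by
  funext i
  rcases Nat.lt_or_ge i.val m with h | h
  · have h1 : i = Fin.castSucc (⟨i.val, h⟩ : Fin m) := by apply Fin.ext; simp
    rw [h1, Fin.snoc_castSucc]
    have h2 : ((⟨i.val, h⟩ : Fin m).castSucc : Fin (m+1)).rev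
        = (⟨m - i.val - 1, by omega⟩ : Fin m).succ := by
      apply Fin.ext
      rw [Fin.val_rev]
      simp only [Fin.val_succ, Fin.coe_castSucc]
      omega
    rw [h2, Fin.cons_succ]
    have h3 : ((⟨m - i.val - 1, by omega⟩ : Fin m).rev : Fin m) = ⟨i.val, h⟩ := by
      apply Fin.ext
      rw [Fin.val_rev]
      simp only
      omega
    rw [h3]
    ring
  · have hi : i = Fin.last m := by
      apply Fin.ext
      have := i.isLt
      simp only [Fin.val_last]
      omega
    rw [hi, Fin.snoc_last]
    have h2 : (Fin.last m).rev = (0 : Fin (m+1)) := by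
      apply Fin.ext
      rw [Fin.val_rev]
      simp
    rw [h2, Fin.cons_zero]

end JAux

/-- if the kernel χ satisfies χ(x₁,…,x_{m+1}) = χ(1−x_{m+1},…,1−x₁), then
the adjoint of T is J T J, i.e. ⟨Tf, g⟩ = ⟨f, (JTJ)g⟩ for all f, g ∈ L²([0,1]^m);
moreover if Tφ = λφ then (JTJ)(Jφ) = λ·(Jφ), and ⟨𝟙, conj(Jφ)⟩ = ⟨φ, 𝟙⟩. -/
theorem J_symmetry_adjoint (m : ℕ) (χ : (Fin (m + 1) → ℝ) → ℝ)
    (hχmeas : Measurable χ) (hχbdd : ∀ y, χ y ∈ Set.Icc (0 : ℝ) 1)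
    (hsym : ∀ y : Fin (m + 1) → ℝ, χ y = χ fun i => 1 - y i.rev) :
    (∀ f g : (Fin m → ℝ) → ℝ, MemLp f 2 (cubeMeasure m) → MemLp g 2 (cubeMeasure m) →
        ∫ x in unitCube m, TOp χ f x * g x =
          ∫ x in unitCube m, f x * Jop (TOp χ (Jop g)) x) ∧
    ∀ (lam : ℝ) (φ : (Fin m → ℝ) → ℝ), (∀ x, TOp χ φ x = lam * φ x) →
      (∀ x, Jop (TOp χ (Jop (Jop φ))) x = lam * Jop φ x) ∧
        ∫ x in unitCube m, Jop φ x = ∫ x in unitCube m, φ x := by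
  constructor
  · intro f g hf hg
    set F : (Fin (m+1) → ℝ) → ℝ :=
      fun y => χ y * (f (fun i : Fin m => y i.castSucc) * g (fun i : Fin m => y i.succ))
      with hFdef
    have hf2 : MemLp (fun y : Fin (m+1) → ℝ => f (fun i : Fin m => y i.castSucc)) 2
        (cubeMeasure (m+1)) := hf.comp_measurePreserving (JAux.mp_proj_castSucc m)
    have hg2 : MemLp (fun y : Fin (m+1) → ℝ => g (fun i : Fin m => y i.succ)) 2
        (cubeMeasure (m+1)) := hg.comp_measurePreserving (JAux.mp_proj_succ m)
    have hpqr : (1 : ENNReal) / 1 = 1 / 2 + 1 / 2 := by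
      rw [ENNReal.div_add_div_same, one_div_one]
      have h22 : (1 : ENNReal) + 1 = 2 := one_add_one_eq_two
      rw [h22]
      exact (ENNReal.div_self (a := (2:ENNReal)) (by norm_num) (by norm_num)).symm
    have hprod : Integrable
        (fun y : Fin (m+1) → ℝ =>
          f (fun i : Fin m => y i.castSucc) * g (fun i : Fin m => y i.succ))
        (cubeMeasure (m+1)) := by
      have := (hg2.smul hf2 (hpqr := ⟨by simp only [← one_div]; exact hpqr.symm⟩) : MemLp _ 1 (cubeMeasure (m+1)))
      rw [memLp_one_iff_integrable] at this
      simpa [smul_eq_mul, Pi.mul_def] using this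
    have hFint : Integrable F (cubeMeasure (m+1)) := by
      refine Integrable.bdd_mul hprod hχmeas.aestronglyMeasurable (c := 1) (Filter.Eventually.of_forall fun y => ?_)
      have h := hχbdd y
      rw [Real.norm_eq_abs, abs_le]
      exact ⟨by linarith [h.1], h.2⟩
    have hL : ∀ x : Fin m → ℝ, TOp χ f x * g x
        = ∫ t in Set.Icc (0:ℝ) 1, F (Fin.cons t x) := by
      intro x
      rw [TOp, ← integral_mul_const]
      refine integral_congr_ae (Filter.Eventually.of_forall fun t => ?_)
      have h1 : (fun i : Fin m => (Fin.cons t x : Fin (m+1) → ℝ) i.castSucc) = shiftIn t x :=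
        funext (JAux.cons_castSucc t x)
      have h2 : (fun i : Fin m => (Fin.cons t x : Fin (m+1) → ℝ) i.succ) = x := by
        funext i; simp
      rw [hFdef]
      simp only [h1, h2]
      ring
    have hR : ∀ x : Fin m → ℝ, f x * Jop (TOp χ (Jop g)) x
        = ∫ t in Set.Icc (0:ℝ) 1, F (Fin.snoc x t) := by
      intro x
      have step1 : f x * Jop (TOp χ (Jop g)) x
          = ∫ t in Set.Icc (0:ℝ) 1, F (Fin.snoc x (1 - t)) := by
        rw [show Jop (TOp χ (Jop g)) x = TOp χ (Jop g) (fun i => 1 - x i.rev) from rfl]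
        rw [TOp, ← integral_const_mul]
        refine integral_congr_ae (Filter.Eventually.of_forall fun t => ?_)
        have hA : χ (Fin.cons t (fun j : Fin m => 1 - x j.rev)) = χ (Fin.snoc x (1 - t)) := by
          rw [hsym (Fin.cons t (fun j : Fin m => 1 - x j.rev)), JAux.keyA]
        have hB := JAux.keyB g t x
        have hC : (fun i : Fin m => (Fin.snoc x (1 - t) : Fin (m+1) → ℝ) i.castSucc) = x := by
          funext i; simp
        rw [hFdef]
        simp only [hC]
        rw [← hA, ← hB]
        ring
      rw [step1]
      exact JAux.integral_refl (fun t => F (Fin.snoc x t))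
    have hcube : ∀ h : (Fin m → ℝ) → ℝ,
        (∫ x in unitCube m, h x) = ∫ x, h x ∂cubeMeasure m := fun _ => rfl
    rw [hcube, hcube]
    calc ∫ x, TOp χ f x * g x ∂cubeMeasure m
        = ∫ x, (∫ t in Set.Icc (0:ℝ) 1, F (Fin.cons t x)) ∂cubeMeasure m :=
          integral_congr_ae (Filter.Eventually.of_forall hL)
      _ = ∫ y, F y ∂cubeMeasure (m+1) := by
          have h := JAux.integral_insertNth_split m 0 F hFint
          simp only [Fin.insertNth_zero'] at h
          exact h
      _ = ∫ x, (∫ t in Set.Icc (0:ℝ) 1, F (Fin.snoc x t)) ∂cubeMeasure m := by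
          have h := JAux.integral_insertNth_split m (Fin.last m) F hFint
          simp only [Fin.insertNth_last'] at h
          exact h.symm
      _ = ∫ x, f x * Jop (TOp χ (Jop g)) x ∂cubeMeasure m :=
          integral_congr_ae (Filter.Eventually.of_forall fun x => (hR x).symm)
  · intro lam φ heig
    have hJJ : Jop (Jop φ) = φ := by
      funext x
      simp [Jop, Fin.rev_rev]
    constructor
    · intro x
      rw [hJJ]
      show TOp χ φ (fun i => 1 - x i.rev) = lam * Jop φ x
      rw [heig]
      rfl
    · exact JAux.integral_sigma m φ

end
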